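/- Let G be a finitely generated nilpotent-by-finite group, let O ⊆ G be an infinite conjugacy class, and pick x ∈ O. Then there exists g ∈ G such that gⁿ*x*g⁻ⁿ ≠ x for every positive integer n. -/

import Mathlib

open Subgroup hiding lowerCentralSeries
open Pointwise commutatorElement

universe u

section Helpers

variable {M : Type u} [Group M]

private lemma lcs_map_eq {Q : Type*} [Group Q] (f : M →* Q)
    (hf : Function.Surjective f) (n : ℕ) :
    (Subgroup.lowerCentralSeries (⊤ : Subgroup M) n).map f = Subgroup.lowerCentralSeries (⊤ : Subgroup Q) n := by
  induction n with
  | zero => exact Subgroup.map_top_of_surjective f hf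
  | succ n ih =>
    show (⁅Subgroup.lowerCentralSeries (⊤ : Subgroup M) n, (⊤ : Subgroup M)⁆).map f
        = ⁅Subgroup.lowerCentralSeries (⊤ : Subgroup Q) n, (⊤ : Subgroup Q)⁆
    rw [Subgroup.map_commutator, ih, Subgroup.map_top_of_surjective f hf]

private lemma comm_mul_left (s x y : M) (hc : ∀ g : M, g * ⁅y, s⁆ = ⁅y, s⁆ * g) :
    ⁅x * y, s⁆ = ⁅x, s⁆ * ⁅y, s⁆ := by
  calc ⁅x * y, s⁆ = x * ⁅y, s⁆ * (s * x⁻¹ * s⁻¹) := by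
        simp only [commutatorElement_def]; group
    _ = ⁅y, s⁆ * (x * (s * x⁻¹ * s⁻¹)) := by rw [hc x]; rw [mul_assoc]
    _ = ⁅y, s⁆ * ⁅x, s⁆ := by simp only [commutatorElement_def]; group
    _ = ⁅x, s⁆ * ⁅y, s⁆ := (hc ⁅x, s⁆).symm

private lemma comm_mul_right (p g h : M) (hc : ∀ z : M, z * ⁅p, h⁆ = ⁅p, h⁆ * z) :
    ⁅p, g * h⁆ = ⁅p, g⁆ * ⁅p, h⁆ := by
  calc ⁅p, g * h⁆ = ⁅p, g⁆ * (g * ⁅p, h⁆ * g⁻¹) := by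
        simp only [commutatorElement_def]; group
    _ = ⁅p, g⁆ * (⁅p, h⁆ * g * g⁻¹) := by rw [hc g]
    _ = ⁅p, g⁆ * ⁅p, h⁆ := by rw [mul_inv_cancel_right]

private lemma comm_inv_right (p g : M) (hc : ∀ z : M, z * ⁅p, g⁆ = ⁅p, g⁆ * z) :
    ⁅p, g⁻¹⁆ = ⁅p, g⁆⁻¹ := by
  have h1 : ⁅p, g⁻¹⁆ = g⁻¹ * ⁅p, g⁆⁻¹ * g := by
    simp only [commutatorElement_def]; group
  have h2 : Commute g⁻¹ ⁅p, g⁆⁻¹ := Commute.inv_right (hc g⁻¹)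
  rw [h1, h2.eq, inv_mul_cancel_right]

private lemma fg_map' {G' : Type*} [Group G'] (f : M →* G') {K : Subgroup M}
    (h : K.FG) : (K.map f).FG := by
  classical
  obtain ⟨W, hW⟩ := h
  exact ⟨W.image f, by rw [Finset.coe_image, ← MonoidHom.map_closure, hW]⟩

private lemma fg_sup {H K : Subgroup M} (hH : H.FG) (hK : K.FG) : (H ⊔ K).FG := by
  obtain ⟨S, hS, hSf⟩ := (Subgroup.fg_iff _).mp hH
  obtain ⟨T, hT, hTf⟩ := (Subgroup.fg_iff _).mp hK
  exact (Subgroup.fg_iff _).mpr ⟨S ∪ T, by rw [Subgroup.closure_union, hS, hT], hSf.union hTf⟩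

private lemma fg_finsetSup {ι : Type*} (s : Finset ι) (f : ι → Subgroup M)
    (hf : ∀ i ∈ s, (f i).FG) : (⨆ i ∈ s, f i).FG := by
  classical
  induction s using Finset.induction_on with
  | empty =>
    have h : (⨆ i ∈ (∅ : Finset ι), f i) = ⊥ := by simp
    rw [h]; exact ⟨∅, by simp⟩
  | insert a t ha ih =>
    rw [Finset.iSup_insert]
    exact fg_sup (hf a (Finset.mem_insert_self a t))
      (ih fun i hi => hf i (Finset.mem_insert_of_mem hi))

/-- Extension lemma: if `L ≤ A`, `L` is normal and fg, and the image of `A` in `M ⧸ L`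
is fg, then `A` is fg. -/
private lemma fg_ext (L A : Subgroup M) [L.Normal] (hLA : L ≤ A)
    (hL : L.FG) (hA : (A.map (QuotientGroup.mk' L)).FG) : A.FG := by
  classical
  obtain ⟨S, hScl, hSfin⟩ := (Subgroup.fg_iff L).mp hL
  obtain ⟨V, hVcl, hVfin⟩ := (Subgroup.fg_iff _).mp hA
  have hmem : ∀ v ∈ V, v ∈ A.map (QuotientGroup.mk' L) := fun v hv =>
    hVcl ▸ Subgroup.subset_closure hv
  let f : M ⧸ L → M := fun v =>
    if h : v ∈ A.map (QuotientGroup.mk' L) then (Subgroup.mem_map.mp h).choose else 1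
  have hf : ∀ v ∈ A.map (QuotientGroup.mk' L),
      f v ∈ A ∧ QuotientGroup.mk' L (f v) = v := by
    intro v hv
    have h' := (Subgroup.mem_map.mp hv).choose_spec
    simp only [f, dif_pos hv]
    exact ⟨h'.1, h'.2⟩
  refine (Subgroup.fg_iff A).mpr ⟨S ∪ f '' ↑V, ?_, hSfin.union (hVfin.image f)⟩
  apply le_antisymm
  · rw [Subgroup.closure_le]
    rintro a (ha | ⟨v, hv, rfl⟩)
    · exact hLA (hScl ▸ Subgroup.subset_closure ha)
    · exact (hf v (hmem v hv)).1
  · intro a haA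
    have h1 : QuotientGroup.mk' L a ∈ A.map (QuotientGroup.mk' L) :=
      Subgroup.mem_map_of_mem _ haA
    have h2 : A.map (QuotientGroup.mk' L)
        ≤ (Subgroup.closure (f '' ↑V)).map (QuotientGroup.mk' L) := by
      rw [← hVcl, Subgroup.closure_le]
      intro v hv
      have h3 : QuotientGroup.mk' L (f v)
          ∈ (Subgroup.closure (f '' ↑V)).map (QuotientGroup.mk' L) :=
        Subgroup.mem_map_of_mem _ (Subgroup.subset_closure (Set.mem_image_of_mem f hv))
      rwa [(hf v (hmem v hv)).2] at h3
    obtain ⟨c, hc, hceq⟩ := h2 h1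
    have hker : c⁻¹ * a ∈ L := by
      have h3 : QuotientGroup.mk' L (c⁻¹ * a) = 1 := by
        rw [map_mul, map_inv, hceq, inv_mul_cancel]
      rwa [← QuotientGroup.ker_mk' L, MonoidHom.mem_ker]
    have h4 : c * (c⁻¹ * a) ∈ Subgroup.closure ((S : Set M) ∪ f '' ↑V) :=
      mul_mem ((Subgroup.closure_mono Set.subset_union_right) hc)
        ((Subgroup.closure_mono Set.subset_union_left)
          (show c⁻¹ * a ∈ Subgroup.closure (S : Set M) from hScl.symm ▸ hker))
    rwa [mul_inv_cancel_left] at h4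

end Helpers

/-- All terms of the lower central series of a fg nilpotent group are finitely generated. -/
private lemma fg_lcs : ∀ (d : ℕ) (M : Type u) [Group M] [Group.FG M],
    Subgroup.lowerCentralSeries (⊤ : Subgroup M) d = ⊥ → ∀ i : ℕ, (Subgroup.lowerCentralSeries (⊤ : Subgroup M) i).FG := by
  intro d
  induction d with
  | zero =>
    intro M _ _ hbot i
    have htop : (⊤ : Subgroup M) = ⊥ := hbot
    have h : Subgroup.lowerCentralSeries (⊤ : Subgroup M) i = ⊥ := le_antisymm (le_trans le_top htop.le) bot_le
    rw [h]; exact ⟨∅, by simp⟩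
  | succ d IH =>
    intro M _ _ hbot
    by_cases h0 : Subgroup.lowerCentralSeries (⊤ : Subgroup M) d = ⊥
    · exact IH M h0
    have hcen : ∀ z ∈ Subgroup.lowerCentralSeries (⊤ : Subgroup M) d, ∀ g : M, z * g = g * z := by
      intro z hz g
      have h1 : ⁅z, g⁆ ∈ Subgroup.lowerCentralSeries (⊤ : Subgroup M) (d + 1) := by
        show ⁅z, g⁆ ∈ ⁅Subgroup.lowerCentralSeries (⊤ : Subgroup M) d, (⊤ : Subgroup M)⁆
        exact commutator_mem_commutator hz (mem_top g)
      rw [hbot, Subgroup.mem_bot] at h1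
      exact commutatorElement_eq_one_iff_mul_comm.mp h1
    have hQbot : Subgroup.lowerCentralSeries (⊤ : Subgroup (M ⧸ Subgroup.lowerCentralSeries (⊤ : Subgroup M) d)) d = ⊥ := by
      rw [← lcs_map_eq (QuotientGroup.mk' _) (QuotientGroup.mk'_surjective _) d,
        Subgroup.map_eq_bot_iff, QuotientGroup.ker_mk']
    have IHQ := IH (M ⧸ Subgroup.lowerCentralSeries (⊤ : Subgroup M) d) hQbot
    have fgL : (Subgroup.lowerCentralSeries (⊤ : Subgroup M) d).FG := by
      cases d with
      | zero =>
        obtain ⟨Sset, hScl, hSfin⟩ := Group.fg_iff.mp ‹Group.FG M›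
        refine (Subgroup.fg_iff _).mpr ⟨Sset, ?_, hSfin⟩
        rw [show Subgroup.lowerCentralSeries (⊤ : Subgroup M) 0 = ⊤ from rfl]
        exact hScl
      | succ e =>
        set L : Subgroup M := Subgroup.lowerCentralSeries (⊤ : Subgroup M) (e + 1) with hLdef
        set P : Subgroup M := Subgroup.lowerCentralSeries (⊤ : Subgroup M) e with hPdef
        have hLP : L = ⁅P, (⊤ : Subgroup M)⁆ := rfl
        obtain ⟨Sset, hScl, hSfin⟩ := Group.fg_iff.mp ‹Group.FG M›
        have hmemL : ∀ (a : ↥P) (s : M), ⁅(a : M), s⁆ ∈ L := fun a s =>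
          hLP ▸ commutator_mem_commutator a.2 (mem_top s)
        let Φ : M → (↥P →* ↥L) := fun s =>
          { toFun := fun a => ⟨⁅(a : M), s⁆, hmemL a s⟩
            map_one' := Subtype.ext (by
              show ⁅((1 : ↥P) : M), s⁆ = 1
              rw [OneMemClass.coe_one, commutatorElement_one_left])
            map_mul' := fun a b => Subtype.ext (by
              show ⁅((a : M) * b), s⁆ = ⁅(a : M), s⁆ * ⁅(b : M), s⁆
              exact comm_mul_left s a b (fun g => (hcen _ (hmemL b s) g).symm)) }
        have fgrange : ∀ s : M, ((Φ s).range).FG := by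
          intro s
          set π := (QuotientGroup.mk' L).subgroupMap P with hπdef
          have hπ : Function.Surjective π := (QuotientGroup.mk' L).subgroupMap_surjective P
          have hker : π.ker ≤ (Φ s).ker := by
            intro a ha
            have h5 : ((π a : ↥(P.map (QuotientGroup.mk' L))) : M ⧸ L) = 1 :=
              congrArg Subtype.val (MonoidHom.mem_ker.mp ha)
            have haL : (a : M) ∈ L := by
              rw [hπdef] at h5
              simp only [MonoidHom.subgroupMap_apply_coe] at h5
              exact (QuotientGroup.eq_one_iff _).mp h5
            rw [MonoidHom.mem_ker]
            exact Subtype.ext (commutatorElement_eq_one_iff_mul_comm.mpr (hcen _ haL s))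
          have hPQ : P.map (QuotientGroup.mk' L) = Subgroup.lowerCentralSeries (⊤ : Subgroup (M ⧸ L)) e :=
            lcs_map_eq _ (QuotientGroup.mk'_surjective L) e
          haveI : Group.FG ↥(P.map (QuotientGroup.mk' L)) :=
            (Group.fg_iff_subgroup_fg _).mpr (hPQ ▸ IHQ e)
          haveI : Group.FG (↥P ⧸ π.ker) := by
            have e1 := QuotientGroup.quotientKerEquivOfSurjective π hπ
            exact Group.fg_of_surjective (f := e1.symm.toMonoidHom) e1.symm.surjective
          let Φ' := QuotientGroup.lift π.ker (Φ s)
            (fun x hx => MonoidHom.mem_ker.mp (hker hx))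
          have hrange : (Φ s).range = Φ'.range := by
            ext y; constructor
            · rintro ⟨a, rfl⟩; exact ⟨QuotientGroup.mk a, rfl⟩
            · rintro ⟨q, rfl⟩
              obtain ⟨a, rfl⟩ := QuotientGroup.mk'_surjective π.ker q
              exact ⟨a, rfl⟩
          rw [hrange]
          exact (Group.fg_iff_subgroup_fg _).mp
            (Group.fg_of_surjective Φ'.rangeRestrict_surjective)
        set S : Finset M := hSfin.toFinset with hSdef
        have hSclF : Subgroup.closure (S : Set M) = ⊤ := by
          rw [hSdef, Set.Finite.coe_toFinset]; exact hScl
        set T : Subgroup M := ⨆ s ∈ S, ((Φ s).range).map L.subtype with hTdef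
        have hTfg : T.FG := fg_finsetSup S _ (fun s _ => fg_map' _ (fgrange s))
        have hTL : T ≤ L := by
          refine iSup_le fun s => iSup_le fun _ => ?_
          exact Subgroup.map_subtype_le _
        have hLT : L ≤ T := by
          rw [hLP]
          refine commutator_le.mpr fun p hp g _ => ?_
          let U : Subgroup M :=
            { carrier := {g : M | ⁅p, g⁆ ∈ T}
              one_mem' := by
                show ⁅p, (1 : M)⁆ ∈ T
                rw [commutatorElement_one_right]; exact T.one_mem
              mul_mem' := by
                intro a b ha hb
                show ⁅p, a * b⁆ ∈ T
                rw [comm_mul_right p a b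
                  (fun z => (hcen _ (hLP ▸ commutator_mem_commutator hp (mem_top b)) z).symm)]
                exact T.mul_mem ha hb
              inv_mem' := by
                intro a ha
                show ⁅p, a⁻¹⁆ ∈ T
                rw [comm_inv_right p a
                  (fun z => (hcen _ (hLP ▸ commutator_mem_commutator hp (mem_top a)) z).symm)]
                exact T.inv_mem ha }
          have hSU : (S : Set M) ⊆ U := by
            intro s hs
            show ⁅p, s⁆ ∈ T
            have hmem' : ⁅p, s⁆ ∈ ((Φ s).range).map L.subtype :=
              ⟨Φ s ⟨p, hp⟩, ⟨⟨p, hp⟩, rfl⟩, rfl⟩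
            exact le_iSup₂ (f := fun (s : M) (_ : s ∈ S) => ((Φ s).range).map L.subtype)
              s hs hmem'
          have htopU : (⊤ : Subgroup M) ≤ U := by
            rw [← hSclF]; exact (Subgroup.closure_le U).mpr hSU
          exact htopU (mem_top g)
        rw [show L = T from le_antisymm hLT hTL]
        exact hTfg
    intro i
    rcases le_or_gt i d with hi | hi
    · have hle : Subgroup.lowerCentralSeries (⊤ : Subgroup M) d ≤ Subgroup.lowerCentralSeries (⊤ : Subgroup M) i :=
        Subgroup.lowerCentralSeries_antitone _ hi
      refine fg_ext (Subgroup.lowerCentralSeries (⊤ : Subgroup M) d) _ hle fgL ?_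
      rw [lcs_map_eq (QuotientGroup.mk' _) (QuotientGroup.mk'_surjective _) i]
      exact IHQ i
    · have h : Subgroup.lowerCentralSeries (⊤ : Subgroup M) i = ⊥ :=
        le_antisymm (hbot ▸ Subgroup.lowerCentralSeries_antitone _ hi) bot_le
      rw [h]; exact ⟨∅, by simp⟩

/-- In a fg abelian group, a subgroup of infinite index avoids all positive powers
of some element. -/
private lemma lemB {A : Type u} [CommGroup A] [Group.FG A] (B : Subgroup A)
    (hB : B.index = 0) : ∃ a : A, ∀ n : ℕ, 0 < n → a ^ n ∉ B := by
  have hnt : ¬ Monoid.IsTorsion (A ⧸ B) := by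
    intro ht
    have hfin : Finite (A ⧸ B) := CommGroup.finite_of_fg_torsion _ ht
    have h1 : Nat.card (A ⧸ B) ≠ 0 := Nat.card_ne_zero.mpr ⟨⟨(1 : A ⧸ B)⟩, hfin⟩
    exact h1 hB
  obtain ⟨q, hq⟩ := not_forall.mp hnt
  obtain ⟨a, rfl⟩ := QuotientGroup.mk'_surjective B q
  refine ⟨a, fun n hn hmem => hq ?_⟩
  exact isOfFinOrder_iff_pow_eq_one.mpr ⟨n, hn, by
    rw [← map_pow]
    exact (QuotientGroup.eq_one_iff _).mpr hmem⟩

/-- Key lemma: in a fg nilpotent group, a subgroup of infinite index avoids all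
positive powers of some element. -/
private lemma lemA : ∀ (d : ℕ) (M : Type u) [Group M] [Group.FG M],
    Subgroup.lowerCentralSeries (⊤ : Subgroup M) d = ⊥ → ∀ H : Subgroup M, H.index = 0 →
    ∃ g : M, ∀ n : ℕ, 0 < n → g ^ n ∉ H := by
  intro d
  induction d with
  | zero =>
    intro M _ _ hbot H hH
    exfalso
    have htop : (⊤ : Subgroup M) = ⊥ := hbot
    have hone : ∀ x : M, x = 1 := fun x => Subgroup.mem_bot.mp (htop ▸ Subgroup.mem_top x)
    have hHtop : H = ⊤ := by
      ext y
      simp only [Subgroup.mem_top, iff_true]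
      rw [hone y]; exact H.one_mem
    rw [hHtop, Subgroup.index_top] at hH
    exact one_ne_zero hH
  | succ d IH =>
    intro M _ _ hbot H hH
    by_cases h0 : Subgroup.lowerCentralSeries (⊤ : Subgroup M) d = ⊥
    · exact IH M h0 H hH
    set L : Subgroup M := Subgroup.lowerCentralSeries (⊤ : Subgroup M) d with hLdef
    have hcen : ∀ z ∈ L, ∀ g : M, z * g = g * z := by
      intro z hz g
      have h1 : ⁅z, g⁆ ∈ Subgroup.lowerCentralSeries (⊤ : Subgroup M) (d + 1) := by
        show ⁅z, g⁆ ∈ ⁅Subgroup.lowerCentralSeries (⊤ : Subgroup M) d, (⊤ : Subgroup M)⁆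
        exact commutator_mem_commutator hz (mem_top g)
      rw [hbot, Subgroup.mem_bot] at h1
      exact commutatorElement_eq_one_iff_mul_comm.mp h1
    have fgL : L.FG := fg_lcs (d + 1) M hbot d
    by_cases hK : (H ⊔ L).index = 0
    · have hQbot : Subgroup.lowerCentralSeries (⊤ : Subgroup (M ⧸ L)) d = ⊥ := by
        rw [← lcs_map_eq (QuotientGroup.mk' L) (QuotientGroup.mk'_surjective L) d,
          Subgroup.map_eq_bot_iff, QuotientGroup.ker_mk']
      have hK' : (((H ⊔ L).map (QuotientGroup.mk' L))).index = 0 := by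
        rw [Subgroup.index_map_eq _ (QuotientGroup.mk'_surjective L)
          (by rw [QuotientGroup.ker_mk']; exact le_sup_right)]
        exact hK
      obtain ⟨q, hq⟩ := IH (M ⧸ L) hQbot _ hK'
      obtain ⟨g, rfl⟩ := QuotientGroup.mk'_surjective L q
      refine ⟨g, fun n hn hmem => hq n hn ?_⟩
      have h2 : QuotientGroup.mk' L (g ^ n) ∈ ((H ⊔ L).map (QuotientGroup.mk' L)) :=
        Subgroup.mem_map_of_mem _ ((le_sup_left : H ≤ H ⊔ L) hmem)
      rwa [map_pow] at h2
    · have hrel : H.relIndex (H ⊔ L) = 0 := by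
        have h2 := Subgroup.relIndex_mul_index (le_sup_left : H ≤ H ⊔ L)
        rw [hH] at h2
        rcases Nat.mul_eq_zero.mp h2 with h | h
        · exact h
        · exact absurd h hK
      have hrelL : H.relIndex L = 0 := by
        by_contra hne
        haveI hfinL : Finite (↥L ⧸ H.subgroupOf L) := Nat.finite_of_card_ne_zero hne
        have hLK : L ≤ H ⊔ L := le_sup_right
        let ψ : (↥L ⧸ H.subgroupOf L) → (↥(H ⊔ L) ⧸ H.subgroupOf (H ⊔ L)) :=
          fun ql => Quotient.liftOn' ql
            (fun l => (QuotientGroup.mk (Subgroup.inclusion hLK l)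
              : ↥(H ⊔ L) ⧸ H.subgroupOf (H ⊔ L)))
            (by
              intro l₁ l₂ hrel'
              have hab : l₁⁻¹ * l₂ ∈ H.subgroupOf L :=
                QuotientGroup.leftRel_apply.mp hrel'
              rw [Subgroup.mem_subgroupOf] at hab
              apply (QuotientGroup.eq (s := H.subgroupOf (H ⊔ L))).mpr
              rw [Subgroup.mem_subgroupOf]
              simpa using hab)
        have hsurj : Function.Surjective ψ := by
          intro qk
          obtain ⟨k, rfl⟩ := QuotientGroup.mk_surjective qk
          have hk : (k : M) ∈ (H : Set M) * (L : Set M) := by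
            rw [← Subgroup.mul_normal H L]; exact k.2
          obtain ⟨h, hh, l, hl, hhl⟩ := Set.mem_mul.mp hk
          refine ⟨QuotientGroup.mk ⟨l, hl⟩, ?_⟩
          show QuotientGroup.mk (Subgroup.inclusion hLK ⟨l, hl⟩) = QuotientGroup.mk k
          apply (QuotientGroup.eq (s := H.subgroupOf (H ⊔ L))).mpr
          rw [Subgroup.mem_subgroupOf]
          have h6 : (((Subgroup.inclusion hLK ⟨l, hl⟩)⁻¹ * k : ↥(H ⊔ L)) : M)
              = l⁻¹ * (k : M) := by
            simp [Subgroup.coe_inclusion]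
          rw [h6, ← hhl, ← hcen l hl h, inv_mul_cancel_left]
          exact hh
        have hfinK : Finite (↥(H ⊔ L) ⧸ H.subgroupOf (H ⊔ L)) :=
          Finite.of_surjective ψ hsurj
        have hne2 : H.relIndex (H ⊔ L) ≠ 0 :=
          Nat.card_ne_zero.mpr ⟨⟨QuotientGroup.mk 1⟩, hfinK⟩
        exact hne2 hrel
      letI : CommGroup ↥L :=
        { (inferInstance : Group ↥L) with
          mul_comm := fun a b => Subtype.ext (hcen a a.2 b) }
      haveI : Group.FG ↥L := (Group.fg_iff_subgroup_fg L).mpr fgL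
      obtain ⟨z, hz⟩ := lemB (H.subgroupOf L) hrelL
      refine ⟨(z : M), fun n hn hmem => hz n hn ?_⟩
      rw [Subgroup.mem_subgroupOf]
      rw [SubmonoidClass.coe_pow]
      exact hmem

/-- If `G` is a finitely generated nilpotent-by-finite group and `O` is an infinite
conjugacy class with `x ∈ O`, then there is `g ∈ G` with `gⁿ * x * g⁻ⁿ ≠ x` for all
positive integers `n`. -/
theorem exists_powers_move_of_infinite_conjClass
    {G : Type*} [Group G] (hfg : Group.FG G)
    (N : Subgroup G) (hN : Group.IsNilpotent N) (hNfi : N.FiniteIndex)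
    (x : G) (hO : ({y : G | ∃ g : G, g * x * g⁻¹ = y}).Infinite) :
    ∃ g : G, ∀ n : ℕ, 0 < n → g ^ n * x * (g ^ n)⁻¹ ≠ x := by
  classical
  haveI := hfg
  haveI := hNfi
  set C : Subgroup G := Subgroup.centralizer {x} with hCdef
  have hCidx : C.index = 0 := by
    by_contra hne
    haveI : Finite (G ⧸ C) := Nat.finite_of_card_ne_zero hne
    let φ : G ⧸ C → G := fun q => Quotient.liftOn' q (fun g => g * x * g⁻¹)
      (by
        intro a b hab
        have h1 : a⁻¹ * b ∈ C := QuotientGroup.leftRel_apply.mp hab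
        have h2 : x * (a⁻¹ * b) = (a⁻¹ * b) * x := by
          have := Subgroup.mem_centralizer_iff.mp h1
          exact this x (Set.mem_singleton x)
        have h3 : a * (x * (a⁻¹ * b)) * b⁻¹ = a * ((a⁻¹ * b) * x) * b⁻¹ := by rw [h2]
        calc a * x * a⁻¹ = a * (x * (a⁻¹ * b)) * b⁻¹ := by group
          _ = a * ((a⁻¹ * b) * x) * b⁻¹ := h3
          _ = b * x * b⁻¹ := by group)
    have hsub : {y : G | ∃ g : G, g * x * g⁻¹ = y} ⊆ Set.range φ := by
      rintro y ⟨g, rfl⟩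
      exact ⟨QuotientGroup.mk g, rfl⟩
    exact hO ((Set.finite_range φ).subset hsub)
  haveI : Group.FG ↥N := inferInstance
  obtain ⟨d, hd⟩ := Subgroup.nilpotent_iff_lowerCentralSeries.mp hN
  have hHidx : (C.subgroupOf N).index = 0 := by
    by_contra hne
    have h1 : (C ⊓ N).relIndex N ≠ 0 := by
      rw [Subgroup.inf_relIndex_right]
      exact hne
    have h2 : (C ⊓ N).index ≠ 0 := by
      rw [← Subgroup.relIndex_mul_index (inf_le_right : C ⊓ N ≤ N)]
      exact Nat.mul_ne_zero h1 hNfi.index_ne_zero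
    have h3 : C.index ∣ (C ⊓ N).index := Subgroup.index_dvd_of_le inf_le_left
    rw [hCidx] at h3
    exact h2 (Nat.eq_zero_of_zero_dvd h3)
  obtain ⟨g, hg⟩ := lemA d ↥N hd (C.subgroupOf N) hHidx
  refine ⟨(g : G), fun n hn heq => hg n hn ?_⟩
  rw [Subgroup.mem_subgroupOf]
  have hc : ((g ^ n : ↥N) : G) = (g : G) ^ n := by
    rw [SubmonoidClass.coe_pow]
  rw [hc, hCdef]
  apply Subgroup.mem_centralizer_iff.mpr
  intro h hh
  rw [Set.mem_singleton_iff] at hh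
  rw [hh]
  calc x * (g : G) ^ n = (((g : G) ^ n * x * ((g : G) ^ n)⁻¹) * (g : G) ^ n) := by rw [heq]
    _ = (g : G) ^ n * x := by group
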